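/- Let G be the spider graph with vertex set {x} ∪ {y_1,…,y_n} ∪ {z_1,…,z_n} and edges {x y_i, y_i z_i} for 1 ≤ i ≤ n, with n ≥ 2. Then the domination number γ(G) = n while the ve-domination number γ_ve(G) = 1. In particular, the ratio γ(G)/γ_ve(G) tends to infinity as n → ∞. -/
import Mathlib


/-- The closed neighborhood `N[D]` of a vertex set `D` in a simple graph `G`. -/
def closedNbhd {V : Type*} (G : SimpleGraph V) (D : Set V) : Set V :=
  D ∪ {v | ∃ d ∈ D, G.Adj d v}

/-- `D` is a vertex-edge dominating set. -/
def IsVeDomSet {V : Type*} (G : SimpleGraph V) (D : Set V) : Prop :=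
  ∀ u v : V, G.Adj u v →
    ∃ w ∈ D, u ∈ closedNbhd G {w} ∨ v ∈ closedNbhd G {w}

/-- `D` is a dominating set: every vertex not in `D` has a neighbor in `D`. -/
def IsDomSet {V : Type*} (G : SimpleGraph V) (D : Set V) : Prop :=
  ∀ v : V, v ∉ D → ∃ d ∈ D, G.Adj d v

/-- The ve-domination number `γ_ve(G)`. -/
noncomputable def veDomNum {V : Type*} (G : SimpleGraph V) : ℕ :=
  sInf {n : ℕ | ∃ D : Set V, IsVeDomSet G D ∧ D.ncard = n}

/-- The domination number `γ(G)`. -/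
noncomputable def domNum {V : Type*} (G : SimpleGraph V) : ℕ :=
  sInf {n : ℕ | ∃ D : Set V, IsDomSet G D ∧ D.ncard = n}

/-- Vertex type of the spider graph: center `x = Sum.inl ()`,
middle vertices `y_i = Sum.inr (Sum.inl i)`, leaves `z_i = Sum.inr (Sum.inr i)`. -/
abbrev SpiderV (n : ℕ) : Type := Unit ⊕ (Fin n ⊕ Fin n)

/-- The spider graph with edges `x y_i` and `y_i z_i` for `1 ≤ i ≤ n`. -/
def spider (n : ℕ) : SimpleGraph (SpiderV n) :=
  SimpleGraph.fromRel (fun a b =>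
    (∃ i : Fin n, a = Sum.inl () ∧ b = Sum.inr (Sum.inl i)) ∨
    (∃ i : Fin n, a = Sum.inr (Sum.inl i) ∧ b = Sum.inr (Sum.inr i)))

lemma spider_adj_iff (n : ℕ) (u v : SpiderV n) : (spider n).Adj u v ↔
    ∃ i : Fin n, (u = Sum.inl () ∧ v = Sum.inr (Sum.inl i)) ∨
      (v = Sum.inl () ∧ u = Sum.inr (Sum.inl i)) ∨
      (u = Sum.inr (Sum.inl i) ∧ v = Sum.inr (Sum.inr i)) ∨
      (v = Sum.inr (Sum.inl i) ∧ u = Sum.inr (Sum.inr i)) := by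
  simp only [spider, SimpleGraph.fromRel_adj]
  constructor
  · rintro ⟨hne, (⟨i, h1, h2⟩ | ⟨i, h1, h2⟩) | (⟨i, h1, h2⟩ | ⟨i, h1, h2⟩)⟩ <;>
      exact ⟨i, by tauto⟩
  · rintro ⟨i, ⟨h1, h2⟩ | ⟨h1, h2⟩ | ⟨h1, h2⟩ | ⟨h1, h2⟩⟩ <;> subst h1 <;> subst h2
    · exact ⟨by simp, Or.inl (Or.inl ⟨i, rfl, rfl⟩)⟩
    · exact ⟨by simp, Or.inr (Or.inl ⟨i, rfl, rfl⟩)⟩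
    · exact ⟨by simp, Or.inl (Or.inr ⟨i, rfl, rfl⟩)⟩
    · exact ⟨by simp, Or.inr (Or.inr ⟨i, rfl, rfl⟩)⟩

lemma spider_adj_x (n : ℕ) (i : Fin n) :
    (spider n).Adj (Sum.inl ()) (Sum.inr (Sum.inl i)) := by
  rw [spider_adj_iff]; exact ⟨i, by tauto⟩

lemma spider_adj_yz (n : ℕ) (i : Fin n) :
    (spider n).Adj (Sum.inr (Sum.inl i)) (Sum.inr (Sum.inr i)) := by
  rw [spider_adj_iff]; exact ⟨i, by tauto⟩

lemma spider_adj_z (n : ℕ) (i : Fin n) (a : SpiderV n)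
    (h : (spider n).Adj a (Sum.inr (Sum.inr i))) : a = Sum.inr (Sum.inl i) := by
  rw [spider_adj_iff] at h
  rcases h with ⟨j, ⟨h1, h2⟩ | ⟨h1, h2⟩ | ⟨h1, h2⟩ | ⟨h1, h2⟩⟩ <;> simp_all

lemma spider_veDomNum (n : ℕ) (hn : 2 ≤ n) : veDomNum (spider n) = 1 := by
  have hmem : (1 : ℕ) ∈ {m : ℕ | ∃ D : Set (SpiderV n), IsVeDomSet (spider n) D ∧ D.ncard = m} := by
    refine ⟨{Sum.inl ()}, ?_, Set.ncard_singleton _⟩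
    intro u v huv
    refine ⟨Sum.inl (), rfl, ?_⟩
    rw [spider_adj_iff] at huv
    rcases huv with ⟨i, ⟨h1, h2⟩ | ⟨h1, h2⟩ | ⟨h1, h2⟩ | ⟨h1, h2⟩⟩ <;> subst h1 <;> subst h2
    · exact Or.inl (Or.inl rfl)
    · exact Or.inr (Or.inl rfl)
    · exact Or.inl (Or.inr ⟨Sum.inl (), rfl, spider_adj_x n i⟩)
    · exact Or.inr (Or.inr ⟨Sum.inl (), rfl, spider_adj_x n i⟩)
  refine le_antisymm (Nat.sInf_le hmem) (le_csInf ⟨1, hmem⟩ ?_)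
  rintro m ⟨D, hD, hcard⟩
  by_contra hm
  interval_cases m
  rw [Set.ncard_eq_zero (Set.toFinite D)] at hcard
  subst hcard
  obtain ⟨w, hw, -⟩ := hD _ _ (spider_adj_x n ⟨0, by omega⟩)
  exact hw

lemma spider_domNum (n : ℕ) (hn : 2 ≤ n) : domNum (spider n) = n := by
  have hmem : n ∈ {m : ℕ | ∃ D : Set (SpiderV n), IsDomSet (spider n) D ∧ D.ncard = m} := by
    refine ⟨Set.range (fun i : Fin n => Sum.inr (Sum.inl i)), ?_, ?_⟩
    · intro v hv
      match v with
      | Sum.inl () =>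
          exact ⟨Sum.inr (Sum.inl ⟨0, by omega⟩), ⟨⟨0, by omega⟩, rfl⟩,
            (spider_adj_x n ⟨0, by omega⟩).symm⟩
      | Sum.inr (Sum.inl i) => exact absurd ⟨i, rfl⟩ hv
      | Sum.inr (Sum.inr i) =>
          exact ⟨Sum.inr (Sum.inl i), ⟨i, rfl⟩, spider_adj_yz n i⟩
    · rw [← Set.image_univ, Set.ncard_image_of_injective _ (by
        intro a b hab; simpa using hab)]
      simp [Set.ncard_univ]
  refine le_antisymm (Nat.sInf_le hmem) (le_csInf ⟨n, hmem⟩ ?_)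
  rintro m ⟨D, hD, hcard⟩
  classical
  set f : Fin n → SpiderV n := fun i =>
    if Sum.inr (Sum.inr i) ∈ D then Sum.inr (Sum.inr i) else Sum.inr (Sum.inl i) with hf
  have hfD : ∀ i, f i ∈ D := by
    intro i
    by_cases h : Sum.inr (Sum.inr i) ∈ D
    · simp [hf, h]
    · obtain ⟨d, hd, hadj⟩ := hD _ h
      have := spider_adj_z n i d hadj
      simpa [hf, h, ← this]
  have hfinj : Function.Injective f := by
    intro i j hij
    simp only [hf] at hij
    split_ifs at hij <;> simp_all
  have hsub : Set.range f ⊆ D := by rintro _ ⟨i, rfl⟩; exact hfD i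
  calc n = (Set.range f).ncard := by
            rw [← Set.image_univ, Set.ncard_image_of_injective _ hfinj]
            simp [Set.ncard_univ]
    _ ≤ D.ncard := Set.ncard_le_ncard hsub (Set.toFinite D)
    _ = m := hcard


/-- For the spider graph with `n ≥ 2` legs, `γ(G) = n` while `γ_ve(G) = 1`;
in particular the ratio `γ/γ_ve` tends to infinity as `n → ∞`. -/
theorem spider_domNum_veDomNum :
    (∀ n : ℕ, 2 ≤ n → domNum (spider n) = n ∧ veDomNum (spider n) = 1) ∧
    Filter.Tendsto
      (fun n : ℕ => (domNum (spider n) : ℝ) / (veDomNum (spider n) : ℝ))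
      Filter.atTop Filter.atTop := by
  refine ⟨fun n hn => ⟨spider_domNum n hn, spider_veDomNum n hn⟩, ?_⟩
  have heq : (fun n : ℕ => (n : ℝ)) =ᶠ[Filter.atTop]
      (fun n : ℕ => (domNum (spider n) : ℝ) / (veDomNum (spider n) : ℝ)) := by
    filter_upwards [Filter.eventually_ge_atTop 2] with n hn
    rw [spider_domNum n hn, spider_veDomNum n hn]
    simp
  exact (tendsto_natCast_atTop_atTop).congr' heq
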